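/- Heath-Brown's identity with k = 4: for any positive integer n < 2x, Λ(n) = Σ_{j=1}^{4} (−1)^{j+1} C(4,j) Σ_{m₁,…,m_j ≤ x^{1/4}} μ(m₁)⋯μ(m_j) Σ_{m₁⋯m_j n₁⋯n_j = n} log n₁, where the inner sum ranges over positive integers n₁,…,n_j whose product with m₁⋯m_j equals n. -/

import Mathlib

open Finset ArithmeticFunction
open scoped ArithmeticFunction.zeta ArithmeticFunction.Moebius

namespace HB4

lemma sum_piFinset_succ {M : Type*} [AddCommMonoid M] {r : ℕ} (s : Finset ℕ)
    (f : (Fin (r+1) → ℕ) → M) :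
    ∑ t ∈ Fintype.piFinset (fun _ : Fin (r+1) => s), f t
      = ∑ a ∈ s, ∑ t ∈ Fintype.piFinset (fun _ : Fin r => s), f (Fin.cons a t) := by
  rw [← Finset.sum_product']
  refine Finset.sum_nbij' (i := fun t => (t 0, Fin.tail t))
    (j := fun p => Fin.cons p.1 p.2) ?_ ?_ ?_ ?_ ?_
  · intro t ht
    simp only [Fintype.mem_piFinset] at ht
    simp only [Finset.mem_product, Fintype.mem_piFinset]
    exact ⟨ht 0, fun i => ht _⟩
  · intro p hp
    simp only [Finset.mem_product, Fintype.mem_piFinset] at hp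
    simp only [Fintype.mem_piFinset]
    intro i
    refine Fin.cases ?_ ?_ i
    · simpa using hp.1
    · intro j; simpa using hp.2 j

  · intro t ht
    exact Fin.cons_self_tail t
  · intro p hp
    simp [Fin.tail_cons]
  · intro t ht
    exact congrArg f (Fin.cons_self_tail t).symm


lemma indicator_sum_extend {M : Type*} [AddCommMonoid M] (r a n : ℕ) (h1 : 1 ≤ a) (han : a ≤ n)
    (A : (Fin r → ℕ) → M) :
    ∑ t ∈ Fintype.piFinset (fun _ : Fin r => Finset.Icc 1 a),
        (if ∏ i, t i = a then A t else 0)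
      = ∑ t ∈ Fintype.piFinset (fun _ : Fin r => Finset.Icc 1 n),
        (if ∏ i, t i = a then A t else 0) := by
  apply Finset.sum_subset
    (Fintype.piFinset_subset _ _ fun i => Finset.Icc_subset_Icc_right han)
  intro t ht hnot
  rw [if_neg]
  intro hprod
  apply hnot
  rw [Fintype.mem_piFinset]
  intro i
  have hdvd : t i ∣ a := hprod ▸ Finset.dvd_prod_of_mem _ (Finset.mem_univ i)
  have hle : t i ≤ a := Nat.le_of_dvd h1 hdvd
  have hge : 1 ≤ t i := (Finset.mem_Icc.1 (Fintype.mem_piFinset.1 ht i)).1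
  exact Finset.mem_Icc.2 ⟨hge, hle⟩

lemma prod_apply_eq_sum (r : ℕ) (v : Fin r → ArithmeticFunction ℝ) (n : ℕ) (hn : 1 ≤ n) :
    (∏ i, v i) n =
      ∑ t ∈ Fintype.piFinset (fun _ : Fin r => Finset.Icc 1 n),
        if ∏ i, t i = n then ∏ i, v i (t i) else 0 := by
  induction r generalizing n with
  | zero =>
      have hpf : Fintype.piFinset (fun _ : Fin 0 => Finset.Icc 1 n) = {finZeroElim} := by
        ext t; simp [funext_iff, Fin.forall_fin_zero_pi]
      rw [hpf, Finset.sum_singleton]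
      simp [ArithmeticFunction.one_apply, eq_comm]
  | succ r ih =>
      rw [Fin.prod_univ_succ, ArithmeticFunction.mul_apply,
        Nat.sum_divisorsAntidiagonal (f := fun a b => v 0 a * (∏ i : Fin r, v i.succ) b),
        sum_piFinset_succ]
      simp only [Fin.prod_univ_succ, Fin.cons_zero, Fin.cons_succ]
      have step1 : ∀ a ∈ Finset.Icc 1 n,
          (∑ t ∈ Fintype.piFinset (fun _ : Fin r => Finset.Icc 1 n),
            if a * ∏ i, t i = n then v 0 a * ∏ i, v i.succ (t i) else 0)
          = if a ∣ n then v 0 a * (∏ i : Fin r, v i.succ) (n / a) else 0 := by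
        intro a ha
        rw [Finset.mem_Icc] at ha
        by_cases hdvd : a ∣ n
        · rw [if_pos hdvd]
          have h1 : 1 ≤ n / a := Nat.one_le_div_iff (by omega) |>.2 (Nat.le_of_dvd hn hdvd)
          have hle : n / a ≤ n := Nat.div_le_self n a
          rw [ih _ (n / a) h1, indicator_sum_extend r (n / a) n h1 hle, Finset.mul_sum]
          apply Finset.sum_congr rfl
          intro t _
          have hiff : a * ∏ i, t i = n ↔ ∏ i, t i = n / a := by
            constructor
            · intro h
              rw [← h, Nat.mul_div_cancel_left _ (by omega : 0 < a)]
            · intro h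
              rw [h, Nat.mul_div_cancel' hdvd]
          rw [mul_ite, mul_zero]
          exact if_congr hiff rfl rfl
        · rw [if_neg hdvd]
          apply Finset.sum_eq_zero
          intro t _
          rw [if_neg]
          intro h
          exact hdvd ⟨∏ i, t i, h.symm⟩
      rw [Finset.sum_congr rfl step1, ← Finset.sum_filter]
      apply Finset.sum_congr ?_ fun _ _ => rfl
      rw [← Finset.Ico_add_one_right_eq_Icc]
      rfl


noncomputable def F (z : ℝ) : ArithmeticFunction ℝ :=
  ⟨fun m => if (m : ℝ) ≤ z then (μ m : ℝ) else 0, by simp⟩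

lemma F_apply (z : ℝ) (m : ℕ) : F z m = if (m : ℝ) ≤ z then (μ m : ℝ) else 0 := rfl

-- `F^r` as a tuple sum
lemma Fpow_apply (z : ℝ) (r n : ℕ) (h1 : 1 ≤ n) (hn : n ≤ N) :
    (F z ^ r) n =
      ∑ t ∈ Fintype.piFinset (fun _ : Fin r => Finset.Icc 1 N),
        if ∏ i, t i = n then ∏ i, F z (t i) else 0 := by
  have := prod_apply_eq_sum r (fun _ => F z) n h1
  rw [Finset.prod_const, Finset.card_univ, Fintype.card_fin] at this
  rw [this, indicator_sum_extend r n N h1 hn]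

-- `log * ζ^r` as a tuple sum
lemma logzeta_apply (r n : ℕ) (h1 : 1 ≤ n) (hn : n ≤ N) :
    ((ArithmeticFunction.log : ArithmeticFunction ℝ) * (ζ : ArithmeticFunction ℝ) ^ r) n =
      ∑ t ∈ Fintype.piFinset (fun _ : Fin (r+1) => Finset.Icc 1 N),
        if ∏ i, t i = n then Real.log (t 0) else 0 := by
  have := prod_apply_eq_sum (r+1)
    (Fin.cons (ArithmeticFunction.log : ArithmeticFunction ℝ) (fun _ => (ζ : ArithmeticFunction ℝ)))
    n h1
  rw [Fin.prod_univ_succ] at this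
  simp only [Fin.cons_zero, Fin.cons_succ, Finset.prod_const, Finset.card_univ,
    Fintype.card_fin] at this
  rw [this, indicator_sum_extend (r+1) n N h1 hn]
  apply Finset.sum_congr rfl
  intro t ht
  apply if_congr Iff.rfl ?_ rfl
  have hzeta : ∀ i : Fin r, ((ζ : ArithmeticFunction ℝ)) (t i.succ) = 1 := by
    intro i
    have := (Finset.mem_Icc.1 (Fintype.mem_piFinset.1 ht i.succ)).1
    have h0 : t i.succ ≠ 0 := by omega
    simp [ArithmeticFunction.natCoe_apply, ArithmeticFunction.zeta_apply, h0]
  rw [Fin.prod_univ_succ]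
  simp [hzeta, ArithmeticFunction.log_apply]


lemma main_j (z : ℝ) (j n : ℕ) (hn : 1 ≤ n) :
    ((F z) ^ (j+1) *
        ((ArithmeticFunction.log : ArithmeticFunction ℝ) * (ζ : ArithmeticFunction ℝ) ^ j)) n
      = ∑ m ∈ Fintype.piFinset (fun _ : Fin (j + 1) => Finset.Icc 1 n),
          ∑ k ∈ Fintype.piFinset (fun _ : Fin (j + 1) => Finset.Icc 1 n),
            if (∀ i, (m i : ℝ) ≤ z) ∧ (∏ i, m i) * (∏ i, k i) = n then
              (∏ i, (μ (m i) : ℝ)) * Real.log (k 0)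
            else 0 := by
  have hstep : ∀ m k : Fin (j+1) → ℕ,
      (if (∀ i, (m i : ℝ) ≤ z) ∧ (∏ i, m i) * (∏ i, k i) = n then
          (∏ i, (μ (m i) : ℝ)) * Real.log (k 0) else 0)
        = (if (∏ i, m i) * (∏ i, k i) = n then
            (∏ i, F z (m i)) * Real.log (k 0) else 0) := by
    intro m k
    by_cases hc : (∏ i, m i) * (∏ i, k i) = n
    · by_cases hz : ∀ i, (m i : ℝ) ≤ z
      · rw [if_pos ⟨hz, hc⟩, if_pos hc]
        congr 1
        exact Finset.prod_congr rfl fun i _ => (if_pos (hz i)).symm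
      · rw [if_neg (by tauto), if_pos hc]
        push_neg at hz
        obtain ⟨i, hi⟩ := hz
        have hF0 : F z (m i) = 0 := by rw [F_apply, if_neg (not_le.2 hi)]
        rw [Finset.prod_eq_zero (Finset.mem_univ i) hF0, zero_mul]
    · rw [if_neg (by tauto), if_neg hc]
  simp only [hstep]
  have hpair : ∀ (c d : ℕ) (X : ℝ),
      (if c * d = n then X else 0)
        = ∑ p ∈ n.divisorsAntidiagonal, (if p.1 = c ∧ p.2 = d then X else 0) := by
    intro c d X
    have : ∀ p : ℕ × ℕ, (if p.1 = c ∧ p.2 = d then X else 0) = (if p = (c, d) then X else 0) :=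
      fun p => if_congr (by rw [Prod.ext_iff]) rfl rfl
    rw [Finset.sum_congr rfl fun p _ => this p,
      Finset.sum_ite_eq' n.divisorsAntidiagonal (c, d) fun _ => X]
    by_cases h : c * d = n
    · rw [if_pos h, if_pos (Nat.mem_divisorsAntidiagonal.2 ⟨h, by omega⟩)]
    · rw [if_neg h, if_neg]
      intro hmem
      exact h (Nat.mem_divisorsAntidiagonal.1 hmem).1
  rw [Finset.sum_congr rfl fun m _ => Finset.sum_congr rfl fun k _ => hpair _ _ _]
  rw [Finset.sum_congr rfl fun m _ => Finset.sum_comm, Finset.sum_comm,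
    ArithmeticFunction.mul_apply]
  apply Finset.sum_congr rfl
  intro p hp
  obtain ⟨hprod, hne⟩ := Nat.mem_divisorsAntidiagonal.1 hp
  have h1a : 1 ≤ p.1 := Nat.pos_of_ne_zero fun h => hne (by rw [← hprod, h, zero_mul])
  have h1b : 1 ≤ p.2 := Nat.pos_of_ne_zero fun h => hne (by rw [← hprod, h, mul_zero])
  have hla : p.1 ≤ n := Nat.le_of_dvd hn ⟨p.2, hprod.symm⟩
  have hlb : p.2 ≤ n := Nat.le_of_dvd hn ⟨p.1, by rw [mul_comm]; exact hprod.symm⟩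
  rw [Fpow_apply z (j+1) p.1 h1a hla, logzeta_apply j p.2 h1b hlb, Finset.sum_mul_sum]
  apply Finset.sum_congr rfl
  intro m _
  apply Finset.sum_congr rfl
  intro k _
  rw [ite_zero_mul_ite_zero]
  exact if_congr (by rw [eq_comm (a := p.1), eq_comm (a := p.2)]) rfl rfl


lemma sub_apply' (f g : ArithmeticFunction ℝ) (n : ℕ) : (f - g) n = f n - g n := by
  have h := congrArg (fun u : ArithmeticFunction ℝ => u n) (sub_add_cancel f g)
  simp only [ArithmeticFunction.add_apply] at h
  linarith

lemma support_mul (f g : ArithmeticFunction ℝ) (zf zg : ℝ) (hzf : 0 ≤ zf) (hzg : 0 ≤ zg)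
    (hf : ∀ m, f m ≠ 0 → zf < m) (hg : ∀ m, g m ≠ 0 → zg < m) :
    ∀ m, (f * g) m ≠ 0 → zf * zg < m := by
  intro m hm
  rw [ArithmeticFunction.mul_apply] at hm
  obtain ⟨p, hp, hne⟩ := Finset.exists_ne_zero_of_sum_ne_zero hm
  obtain ⟨hprod, hn0⟩ := Nat.mem_divisorsAntidiagonal.1 hp
  have h1 := hf p.1 fun h => hne (by rw [h, zero_mul])
  have h2 := hg p.2 fun h => hne (by rw [h, mul_zero])
  calc zf * zg < (p.1 : ℝ) * (p.2 : ℝ) := by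
        apply mul_lt_mul'' h1 h2 hzf hzg
    _ = (m : ℝ) := by rw [← hprod]; push_cast; ring

noncomputable def G (z : ℝ) : ArithmeticFunction ℝ := (ζ : ArithmeticFunction ℝ) * F z - 1

lemma G_support (z : ℝ) : ∀ m, G z m ≠ 0 → z < m := by
  intro m hm
  by_contra hle
  push_neg at hle
  apply hm
  rcases Nat.eq_zero_or_pos m with rfl | h1
  · simp [G]
  · rw [G, sub_apply', ArithmeticFunction.coe_zeta_mul_apply]
    have hFd : ∀ d ∈ m.divisors, F z d = (μ d : ℝ) := by
      intro d hd
      obtain ⟨hdvd, hm0⟩ := Nat.mem_divisors.1 hd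
      have hdm : d ≤ m := Nat.le_of_dvd h1 hdvd
      have : (d : ℝ) ≤ m := Nat.cast_le.2 hdm
      rw [F_apply, if_pos (le_trans this hle)]
    rw [Finset.sum_congr rfl hFd]
    have hmz := congrArg (fun f : ArithmeticFunction ℝ => f m)
      ArithmeticFunction.coe_moebius_mul_coe_zeta
    rw [ArithmeticFunction.coe_mul_zeta_apply] at hmz
    simp only [ArithmeticFunction.intCoe_apply] at hmz
    rw [hmz, sub_self]

lemma Gpow4_support (z : ℝ) (hz : 0 ≤ z) : ∀ m, (G z ^ 4) m ≠ 0 → z ^ (4:ℕ) < m := by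
  have h2 := support_mul (G z) (G z) z z hz hz (G_support z) (G_support z)
  have h3 := support_mul (G z * G z) (G z) _ _ (by positivity) hz h2 (G_support z)
  have h4 := support_mul (G z * G z * G z) (G z) _ _ (by positivity) hz h3 (G_support z)
  intro m hm
  have hpow : G z ^ 4 = G z * G z * G z * G z := by ring
  rw [hpow] at hm
  have := h4 m hm
  nlinarith [this]

lemma nsmul_apply (c : ℕ) (f : ArithmeticFunction ℝ) (n : ℕ) : (c • f) n = c * f n := by
  induction c with
  | zero => simp
  | succ c ih =>
      rw [succ_nsmul, ArithmeticFunction.add_apply, ih]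
      push_cast
      ring

lemma HBid (z : ℝ) :
    (Λ : ArithmeticFunction ℝ) =
      ((4 • (F z ^ (0+1) * ((ArithmeticFunction.log : ArithmeticFunction ℝ)
            * (ζ : ArithmeticFunction ℝ) ^ 0))
        - 6 • (F z ^ (1+1) * (ArithmeticFunction.log * (ζ : ArithmeticFunction ℝ) ^ 1)))
        + 4 • (F z ^ (2+1) * (ArithmeticFunction.log * (ζ : ArithmeticFunction ℝ) ^ 2))
        - 1 • (F z ^ (3+1) * (ArithmeticFunction.log * (ζ : ArithmeticFunction ℝ) ^ 3)))
      + Λ * G z ^ 4 := by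
  have hZM : (ζ : ArithmeticFunction ℝ) * (μ : ArithmeticFunction ℝ) = 1 :=
    coe_zeta_mul_coe_moebius
  rw [← moebius_mul_log_eq_vonMangoldt, G]
  linear_combination (ArithmeticFunction.log *
    (4 • (F z ^ 1) - 6 • ((ζ : ArithmeticFunction ℝ) * F z ^ 2)
      + 4 • ((ζ : ArithmeticFunction ℝ) ^ 2 * F z ^ 3)
      - (ζ : ArithmeticFunction ℝ) ^ 3 * F z ^ 4)) * hZM

end HB4

open HB4 in
/-- Heath-Brown's identity with `k = 4`: for `0 < n < 2x`,
`Λ(n) = Σ_{j=1}^{4} (−1)^{j+1} C(4,j) Σ_{m₁,…,m_j ≤ x^{1/4}} μ(m₁)⋯μ(m_j)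
Σ_{m₁⋯m_j n₁⋯n_j = n} log n₁`. (The outer index below is `j+1` for `j ∈ range 4`.) -/
theorem stmt_4 (x : ℝ) (n : ℕ) (hn : 0 < n) (hx : (n : ℝ) < 2 * x) :
    (Λ n : ℝ) =
      ∑ j ∈ Finset.range 4, (-1 : ℝ) ^ j * (Nat.choose 4 (j + 1)) *
        ∑ m ∈ Fintype.piFinset (fun _ : Fin (j + 1) => Finset.Icc 1 n),
          ∑ k ∈ Fintype.piFinset (fun _ : Fin (j + 1) => Finset.Icc 1 n),
            if (∀ i, (m i : ℝ) ≤ x ^ ((1 : ℝ) / 4)) ∧ (∏ i, m i) * (∏ i, k i) = n then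
              (∏ i, (μ (m i) : ℝ)) * Real.log (k 0)
            else 0 := by
  set z := x ^ ((1 : ℝ) / 4) with hzdef
  have hn1 : 1 ≤ n := hn
  have hncast : (1 : ℝ) ≤ (n : ℝ) := by exact_mod_cast Nat.one_le_cast.2 hn1
  have hx0 : 0 < x := by linarith
  have hz0 : 0 ≤ z := Real.rpow_nonneg hx0.le _
  have hz4 : z ^ (4 : ℕ) = x := by
    rw [hzdef, ← Real.rpow_natCast (x ^ ((1 : ℝ) / 4)) 4, ← Real.rpow_mul hx0.le]
    norm_num
  have hrem : ((Λ : ArithmeticFunction ℝ) * G z ^ 4) n = 0 := by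
    rw [ArithmeticFunction.mul_apply]
    apply Finset.sum_eq_zero
    intro p hp
    obtain ⟨hprod, hne⟩ := Nat.mem_divisorsAntidiagonal.1 hp
    by_contra hne0
    have hΛ : Λ p.1 ≠ 0 := fun h => hne0 (by rw [h, zero_mul])
    have hG : (G z ^ 4) p.2 ≠ 0 := fun h => hne0 (by rw [h, mul_zero])
    have h2 : 2 ≤ p.1 := (ArithmeticFunction.vonMangoldt_ne_zero_iff.1 hΛ).two_le
    have hb : z ^ (4 : ℕ) < p.2 := Gpow4_support z hz0 p.2 hG
    rw [hz4] at hb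
    have hcast : (n : ℝ) = (p.1 : ℝ) * (p.2 : ℝ) := by
      rw [← hprod]; push_cast; ring
    have h2' : (2 : ℝ) ≤ (p.1 : ℝ) := by exact_mod_cast h2
    nlinarith
  have hId := congrArg (fun f : ArithmeticFunction ℝ => f n) (HBid z)
  simp only [ArithmeticFunction.add_apply, sub_apply', nsmul_apply] at hId
  have h0 := main_j z 0 n hn1
  have h1 := main_j z 1 n hn1
  have h2 := main_j z 2 n hn1
  have h3 := main_j z 3 n hn1
  rw [Finset.sum_range_succ, Finset.sum_range_succ, Finset.sum_range_succ,
    Finset.sum_range_succ, Finset.sum_range_zero, ← h0, ← h1, ← h2, ← h3]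
  rw [hrem] at hId
  have c1 : ((Nat.choose 4 (0+1) : ℕ) : ℝ) = 4 := by norm_num
  have c2 : ((Nat.choose 4 (1+1) : ℕ) : ℝ) = 6 := by norm_num [Nat.choose]
  have c3 : ((Nat.choose 4 (2+1) : ℕ) : ℝ) = 4 := by norm_num
  have c4 : ((Nat.choose 4 (3+1) : ℕ) : ℝ) = 1 := by norm_num
  rw [c1, c2, c3, c4]
  linear_combination hId
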